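/- (Optimality of the BOOMP selection criterion) With the notation of Lemma 1, let f ∈ H and for each j ∈ {1,…,N} let f̃^{(j)} denote the orthogonal projection of f onto span{α_n : n ≠ j}. Then ‖f − f̃^{(j)}‖ is minimized over j exactly at those indices minimizing |c_j|² / ‖β_j‖², where c_j = ⟨β_j, f⟩. -/

import Mathlib

open scoped InnerProductSpace
open Finset

theorem boomp_stmt8 {H : Type*} [NormedAddCommGroup H] [InnerProductSpace ℂ H]
    {N : ℕ} (α β : Fin N → H) (f : H) (ft : Fin N → H)
    (hli : LinearIndependent ℂ α)
    (hβmem : ∀ m, β m ∈ Submodule.span ℂ (Set.range α))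
    (hbi : ∀ n m, ⟪α n, β m⟫_ℂ = if n = m then 1 else 0)
    (hftmem : ∀ j, ft j ∈ Submodule.span ℂ (α '' {n : Fin N | n ≠ j}))
    (hftorth : ∀ j, ∀ v ∈ Submodule.span ℂ (α '' {n : Fin N | n ≠ j}),
      ⟪v, f - ft j⟫_ℂ = 0) :
    ∀ j : Fin N,
      (∀ k, ‖f - ft j‖ ≤ ‖f - ft k‖) ↔
      (∀ k, ‖⟪β j, f⟫_ℂ‖ ^ 2 / ‖β j‖ ^ 2 ≤ ‖⟪β k, f⟫_ℂ‖ ^ 2 / ‖β k‖ ^ 2) := by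
  classical
  set V : Submodule ℂ H := Submodule.span ℂ (Set.range α) with hV
  haveI : FiniteDimensional ℂ V := FiniteDimensional.span_of_finite ℂ (Set.finite_range α)
  set Pf : H := (V.orthogonalProjectionOnto f : H) with hPf
  have hPfmem : Pf ∈ V := (V.orthogonalProjectionOnto f).2
  have hPforth : ∀ w ∈ V, ⟪f - Pf, w⟫_ℂ = 0 := fun w hw => V.starProjection_inner_eq_zero f w hw
  -- basic facts
  have hβne : ∀ j, β j ≠ 0 := by
    intro j hj
    have := hbi j j
    simp [hj] at this
  have hSle : ∀ j : Fin N, Submodule.span ℂ (α '' {n : Fin N | n ≠ j}) ≤ V := by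
    intro j
    apply Submodule.span_mono
    rintro _ ⟨n, -, rfl⟩
    exact Set.mem_range_self n
  have hβS : ∀ j : Fin N, ∀ v ∈ Submodule.span ℂ (α '' {n : Fin N | n ≠ j}),
      ⟪β j, v⟫_ℂ = 0 := by
    intro j v hv
    have : Submodule.span ℂ (α '' {n : Fin N | n ≠ j}) ≤ LinearMap.ker (innerSL ℂ (β j) : H →ₗ[ℂ] ℂ) := by
      apply Submodule.span_le.2
      rintro _ ⟨n, hn, rfl⟩
      have h := hbi n j
      rw [if_neg hn] at h
      simpa using (inner_eq_zero_symm.mp h)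
    exact this hv
  -- key identity
  have key : ∀ j : Fin N,
      ‖f - ft j‖ ^ 2 = ‖f - Pf‖ ^ 2 + ‖⟪β j, f⟫_ℂ‖ ^ 2 / ‖β j‖ ^ 2 := by
    intro j
    set t : ℂ := ⟪α j, Pf - ft j⟫_ℂ with ht
    have hdV : Pf - ft j ∈ V := Submodule.sub_mem V hPfmem (hSle j (hftmem j))
    -- Pf - ft j = t • β j
    have hdec : Pf - ft j = t • β j := by
      have huV : (Pf - ft j) - t • β j ∈ V :=
        Submodule.sub_mem V hdV (Submodule.smul_mem V t (hβmem j))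
      have horth : ∀ n : Fin N, ⟪α n, (Pf - ft j) - t • β j⟫_ℂ = 0 := by
        intro n
        rw [inner_sub_right, inner_smul_right, hbi n j]
        by_cases hn : n = j
        · subst hn; simp [← ht]
        · rw [if_neg hn, mul_zero, sub_zero]
          have hnS : α n ∈ Submodule.span ℂ (α '' {m : Fin N | m ≠ j}) :=
            Submodule.subset_span ⟨n, hn, rfl⟩
          have h1 : ⟪α n, f - ft j⟫_ℂ = 0 := hftorth j _ hnS
          have h2 : ⟪α n, f - Pf⟫_ℂ = 0 := by
            rw [inner_eq_zero_symm]
            exact hPforth _ (hSle j hnS)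
          have : ⟪α n, f - ft j⟫_ℂ - ⟪α n, f - Pf⟫_ℂ = ⟪α n, Pf - ft j⟫_ℂ := by
            rw [← inner_sub_right]
            congr 1
            abel
          rw [← this, h1, h2, sub_zero]
      have huorth : ∀ w ∈ V, ⟪(Pf - ft j) - t • β j, w⟫_ℂ = 0 := by
        intro w hw
        have : V ≤ LinearMap.ker (innerSL ℂ ((Pf - ft j) - t • β j) : H →ₗ[ℂ] ℂ) := by
          apply Submodule.span_le.2
          rintro _ ⟨n, rfl⟩
          exact LinearMap.mem_ker.mpr (inner_eq_zero_symm.mp (horth n))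
        exact this hw
      have : ⟪(Pf - ft j) - t • β j, (Pf - ft j) - t • β j⟫_ℂ = 0 := huorth _ huV
      exact sub_eq_zero.mp (inner_self_eq_zero.mp this)
    -- c = t * ‖β j‖^2
    have hc : ⟪β j, f⟫_ℂ = t * (‖β j‖ : ℂ) ^ 2 := by
      have h1 : ⟪β j, ft j⟫_ℂ = 0 := hβS j _ (hftmem j)
      have h2 : ⟪β j, f - Pf⟫_ℂ = 0 := by
        rw [inner_eq_zero_symm]
        exact hPforth _ (hβmem j)
      have : ⟪β j, f⟫_ℂ = ⟪β j, f - Pf⟫_ℂ + ⟪β j, Pf - ft j⟫_ℂ + ⟪β j, ft j⟫_ℂ := by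
        rw [← inner_add_right, ← inner_add_right]
        congr 1
        abel
      rw [this, h1, h2, add_zero, zero_add, hdec, inner_smul_right,
        inner_self_eq_norm_sq_to_K]
      norm_cast
    -- Pythagoras
    have hfd : f - ft j = (f - Pf) + (Pf - ft j) := by abel
    have hperp : ⟪f - Pf, Pf - ft j⟫_ℂ = 0 := hPforth _ hdV
    have hpyth := norm_add_sq_eq_norm_sq_add_norm_sq_of_inner_eq_zero (f - Pf) (Pf - ft j) hperp
    have hβpos : (0:ℝ) < ‖β j‖ := norm_pos_iff.mpr (hβne j)
    have hnorm : ‖⟪β j, f⟫_ℂ‖ = ‖t‖ * ‖β j‖ ^ 2 := by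
      rw [hc, norm_mul]
      simp [sq]
    have hd : ‖Pf - ft j‖ = ‖t‖ * ‖β j‖ := by
      rw [hdec, norm_smul]
    rw [hfd]
    rw [show ‖(f - Pf) + (Pf - ft j)‖ ^ 2 = ‖(f - Pf) + (Pf - ft j)‖ * ‖(f - Pf) + (Pf - ft j)‖
      from sq _, hpyth, hd, hnorm]
    field_simp
  -- conclude
  intro j
  have hiff : ∀ j k : Fin N, (‖f - ft j‖ ≤ ‖f - ft k‖ ↔
      ‖⟪β j, f⟫_ℂ‖ ^ 2 / ‖β j‖ ^ 2 ≤ ‖⟪β k, f⟫_ℂ‖ ^ 2 / ‖β k‖ ^ 2) := by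
    intro j k
    rw [← pow_le_pow_iff_left₀ (norm_nonneg _) (norm_nonneg _) two_ne_zero, key j, key k,
      add_le_add_iff_left]
  constructor
  · intro h k; exact (hiff j k).mp (h k)
  · intro h k; exact (hiff j k).mpr (h k)
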